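/- Let Γ_ε(x,t;y,s) be a kernel satisfying |∇_x ∇_y Γ_ε(x,t;y,s)| ≤ C(t−s)^{−(d+2)/2} exp(−κ|x−y|²/(t−s)) for s < t. Let F be bounded on Q_{2r}(x₀,t₀) and Hölder continuous in x with exponent λ ∈ (0,1), and let 0 < ε ≤ r. Then for (x,t) ∈ Q_r(x₀,t₀), ∫_{Q_{2r}(x₀,t₀)} |∇_x∇_y Γ_ε(x,t;y,s)| |F(y,s) − F(x,s)| dy ds ≤ C ln(ε^{−1}r + 2) ‖F‖_{L^∞(Q_{2r})} + C ε^λ ‖F‖_{C^{λ,0}(Q_{2r})}, where ‖F‖_{C^{λ,0}} = sup_{x≠y, t} |F(x,t)−F(y,t)|/|x−y|^λ. -/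

import Mathlib

open MeasureTheory


lemma gauss_integrable (d : ℕ) {b : ℝ} (hb : 0 < b) :
    Integrable (fun y : EuclideanSpace ℝ (Fin d) => Real.exp (-(b * ‖y‖^2))) := by
  have h := GaussianFourier.integrable_cexp_neg_mul_sq_norm_add
    (V := EuclideanSpace ℝ (Fin d)) (b := (b:ℂ)) (by simpa using hb) 0 0
  refine h.re.congr (Filter.Eventually.of_forall fun y => ?_)
  have : (-(b:ℂ) * (‖y‖:ℂ)^2 + 0 * ((inner ℝ (0 : EuclideanSpace ℝ (Fin d)) y : ℝ) : ℂ))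
      = ((-(b * ‖y‖^2) : ℝ) : ℂ) := by push_cast; ring
  simp only [this, Complex.exp_ofReal_re, RCLike.re_to_complex]

lemma gauss_integrable' (d : ℕ) {b : ℝ} (hb : 0 < b) (x : EuclideanSpace ℝ (Fin d)) :
    Integrable (fun y : EuclideanSpace ℝ (Fin d) => Real.exp (-(b * ‖x - y‖^2))) :=
  (gauss_integrable d hb).comp_sub_left x

lemma gauss_integral (d : ℕ) {b : ℝ} (hb : 0 < b) (x : EuclideanSpace ℝ (Fin d)) :
    (∫ y : EuclideanSpace ℝ (Fin d), Real.exp (-(b * ‖x - y‖^2)))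
      = (Real.pi / b) ^ ((d:ℝ)/2) := by
  rw [integral_sub_left_eq_self (fun v => Real.exp (-(b * ‖v‖^2))) volume x]
  have := GaussianFourier.integral_rexp_neg_mul_sq_norm (V := EuclideanSpace ℝ (Fin d)) hb
  simp only [neg_mul] at this ⊢
  rw [this]
  norm_num [finrank_euclideanSpace_fin]

lemma rpow_exp_key {lam : ℝ} (hlam0 : 0 < lam) (hlam1 : lam ≤ 1) {b z : ℝ}
    (hb : 0 < b) (hz : 0 ≤ z) :
    z ^ lam * Real.exp (-(b * z^2)) ≤ b ^ (-(lam/2)) * Real.exp (-(b * z^2)/2) := by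
  have key : z ^ lam ≤ b ^ (-(lam/2)) * Real.exp (b * z^2 / 2) := by
    rcases le_total z (b ^ (-(1:ℝ)/2)) with h | h
    · calc z ^ lam ≤ (b ^ ((-1:ℝ)/2)) ^ lam := Real.rpow_le_rpow hz (by simpa using h) hlam0.le
        _ = b ^ (-(lam/2)) := by
            rw [← Real.rpow_mul hb.le]; ring_nf
        _ ≤ b ^ (-(lam/2)) * Real.exp (b * z^2 / 2) := by
            refine le_mul_of_one_le_right (Real.rpow_nonneg hb.le _) (Real.one_le_exp ?_)
            positivity
    · set w := z * b ^ ((1:ℝ)/2) with hwdef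
      have hbp : (0:ℝ) < b ^ ((1:ℝ)/2) := Real.rpow_pos_of_pos hb _
      have hw0 : 0 ≤ w := mul_nonneg hz hbp.le
      have hw1 : 1 ≤ w := by
        have h1 : b ^ (-(1:ℝ)/2) * b ^ ((1:ℝ)/2) = 1 := by
          rw [← Real.rpow_add hb]; norm_num
        calc (1:ℝ) = b ^ (-(1:ℝ)/2) * b ^ ((1:ℝ)/2) := h1.symm
          _ ≤ w := mul_le_mul_of_nonneg_right h hbp.le
      have hwsq : w ^ 2 = b * z ^ 2 := by
        have h2 : (b ^ ((1:ℝ)/2)) ^ 2 = b := by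
          rw [← Real.rpow_natCast (b ^ ((1:ℝ)/2)) 2, ← Real.rpow_mul hb.le]; norm_num
        rw [hwdef, mul_pow, h2]; ring
      have hwl : w ^ lam ≤ Real.exp (b * z^2 / 2) := by
        calc w ^ lam ≤ w ^ (1:ℝ) := Real.rpow_le_rpow_of_exponent_le hw1 hlam1
          _ = w := Real.rpow_one w
          _ ≤ w^2/2 + 1 := by nlinarith [sq_nonneg (w - 1)]
          _ ≤ Real.exp (w^2/2) := by
              have := Real.add_one_le_exp (w^2/2); linarith
          _ = Real.exp (b * z^2/2) := by rw [hwsq]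
      have hzw : z ^ lam = b ^ (-(lam/2)) * w ^ lam := by
        rw [hwdef, Real.mul_rpow hz hbp.le, ← Real.rpow_mul hb.le, ← mul_assoc,
          mul_comm (b ^ (-(lam/2))), mul_assoc, ← Real.rpow_add hb]
        ring_nf
        rw [Real.rpow_zero, mul_one]
      rw [hzw]
      exact mul_le_mul_of_nonneg_left hwl (Real.rpow_nonneg hb.le _)
  calc z ^ lam * Real.exp (-(b * z^2))
      ≤ (b ^ (-(lam/2)) * Real.exp (b * z^2 / 2)) * Real.exp (-(b * z^2)) :=
        mul_le_mul_of_nonneg_right key (Real.exp_pos _).le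
    _ = b ^ (-(lam/2)) * Real.exp (-(b * z^2)/2) := by
        rw [mul_assoc, ← Real.exp_add]; congr 1; ring

lemma piece (d : ℕ) (x : EuclideanSpace ℝ (Fin d)) (t c coef p : ℝ) (hc : 0 < c)
    (hcoef : 0 ≤ coef) {I : Set ℝ} (hI : MeasurableSet I)
    (hIsub : ∀ s ∈ I, s < t) (φ : ℝ → ℝ)
    (hφ : ∀ s ∈ I, (t - s) ^ p * (t - s) ^ ((d:ℝ)/2) = φ s)
    (hIntφ : IntegrableOn φ I) :
    Integrable ((Set.univ ×ˢ I).indicator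
      (fun q : EuclideanSpace ℝ (Fin d) × ℝ =>
        coef * (t - q.2) ^ p * Real.exp (-(c / (t - q.2) * ‖x - q.1‖^2)))) ∧
    (∫ q : EuclideanSpace ℝ (Fin d) × ℝ, (Set.univ ×ˢ I).indicator
      (fun q => coef * (t - q.2) ^ p * Real.exp (-(c / (t - q.2) * ‖x - q.1‖^2))) q)
      = coef * (Real.pi / c) ^ ((d:ℝ)/2) * ∫ s in I, φ s := by
  set h : EuclideanSpace ℝ (Fin d) × ℝ → ℝ :=
    fun q => coef * (t - q.2) ^ p * Real.exp (-(c / (t - q.2) * ‖x - q.1‖^2)) with hh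
  have hmeas : Measurable h := by
    apply Measurable.mul
    · exact measurable_const.mul ((measurable_const.sub measurable_snd).pow measurable_const)
    · apply Measurable.exp
      apply Measurable.neg
      apply Measurable.mul
      · exact measurable_const.div (measurable_const.sub measurable_snd)
      · exact ((measurable_fst.const_sub x).norm).pow measurable_const
  have hinner : ∀ s ∈ I, (∫ y, h (y, s)) = coef * (Real.pi / c) ^ ((d:ℝ)/2) * φ s := by
    intro s hs
    have hu : 0 < t - s := sub_pos.mpr (hIsub s hs)
    have hb : 0 < c / (t - s) := div_pos hc hu
    simp only [hh]
    rw [integral_const_mul, gauss_integral d hb x]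
    have h1 : Real.pi / (c / (t - s)) = (Real.pi / c) * (t - s) := by
      field_simp
    rw [h1, Real.mul_rpow (by positivity) hu.le, ← hφ s hs]
    ring
  have hnorm : ∀ s ∈ I, ∀ y, ‖h (y, s)‖ = h (y, s) := by
    intro s hs y
    have hu : 0 < t - s := sub_pos.mpr (hIsub s hs)
    have h0 : 0 ≤ h (y, s) := by
      simp only [hh]
      have := Real.rpow_nonneg hu.le p
      positivity
    rw [Real.norm_eq_abs, abs_of_nonneg h0]
  have key : Integrable h
      ((volume : Measure (EuclideanSpace ℝ (Fin d))).prod (volume.restrict I)) := by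
    rw [integrable_prod_iff' hmeas.aestronglyMeasurable]
    constructor
    · filter_upwards [ae_restrict_mem hI] with s hs
      have hu : 0 < t - s := sub_pos.mpr (hIsub s hs)
      have hb : 0 < c / (t - s) := div_pos hc hu
      exact (gauss_integrable' d hb x).const_mul (coef * (t - s) ^ p)
    · apply Integrable.congr ((hIntφ.const_mul (coef * (Real.pi / c) ^ ((d:ℝ)/2))))
      filter_upwards [ae_restrict_mem hI] with s hs
      have h2 : (∫ y, ‖h (y, s)‖) = ∫ y, h (y, s) :=
        integral_congr_ae (Filter.Eventually.of_forall fun y => hnorm s hs y)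
      rw [h2, hinner s hs]
  have hrestr : (volume : Measure (EuclideanSpace ℝ (Fin d) × ℝ)).restrict (Set.univ ×ˢ I)
      = (volume : Measure (EuclideanSpace ℝ (Fin d))).prod (volume.restrict I) := by
    rw [Measure.volume_eq_prod, ← Measure.prod_restrict, Measure.restrict_univ]
  have hIOn : IntegrableOn h (Set.univ ×ˢ I) := by
    rw [IntegrableOn, hrestr]; exact key
  constructor
  · exact (integrable_indicator_iff (MeasurableSet.univ.prod hI)).mpr hIOn
  · rw [integral_indicator (MeasurableSet.univ.prod hI)]
    calc (∫ q in Set.univ ×ˢ I, h q)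
        = ∫ z, h z ∂((volume : Measure (EuclideanSpace ℝ (Fin d))).prod (volume.restrict I)) := by
          rw [← hrestr]
      _ = ∫ s in I, ∫ y, h (y, s) := integral_prod_symm h key
      _ = ∫ s in I, coef * (Real.pi / c) ^ ((d:ℝ)/2) * φ s :=
          setIntegral_congr_fun hI (fun s hs => hinner s hs)
      _ = coef * (Real.pi / c) ^ ((d:ℝ)/2) * ∫ s in I, φ s := by
          rw [integral_const_mul]

lemma log_aux {eps r T : ℝ} (heps : 0 < eps) (hepsr : eps ≤ r) (hT0 : 0 < T)
    (hT4 : T ≤ (2*r)^2) :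
    Real.log (T / eps^2) ≤ 4 * Real.log (eps⁻¹ * r + 2) := by
  have heps2 : (0:ℝ) < eps^2 := pow_pos heps 2
  have h1 : T / eps^2 ≤ (eps⁻¹ * r + 2)^4 := by
    rw [div_le_iff₀ heps2]
    have hra : r = (eps⁻¹ * r) * eps := by field_simp
    set a := eps⁻¹ * r with hadef
    have ha0 : 0 ≤ a := by
      rw [hadef]
      exact mul_nonneg (inv_nonneg.mpr heps.le) (heps.le.trans hepsr)
    have key : (2*r)^2 ≤ (a + 2)^4 * eps^2 := by
      calc (2*r)^2 = 4 * a^2 * eps^2 := by rw [hra]; ring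
        _ ≤ (a+2)^4 * eps^2 := by
            have h4 : 4 * a^2 ≤ (a+2)^4 := by
              nlinarith [sq_nonneg a, sq_nonneg (a-1), sq_nonneg (a+2), sq_nonneg (a^2-2)]
            exact mul_le_mul_of_nonneg_right h4 heps2.le
    exact le_trans hT4 key
  calc Real.log (T/eps^2) ≤ Real.log ((eps⁻¹ * r + 2)^4) :=
        Real.log_le_log (div_pos hT0 heps2) h1
    _ = 4 * Real.log (eps⁻¹ * r + 2) := by rw [Real.log_pow]; norm_num

/-- Logarithmic estimate for the singular integral of a mixed-derivative Gaussian kernel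
against the oscillation of a bounded Hölder function:
∫_{Q_{2r}} |∇ₓ∇_y Γ_ε| |F(y,s) − F(x,s)| ≤ C ln(ε^{−1}r + 2)‖F‖_∞ + Cε^λ ‖F‖_{C^{λ,0}}. -/
theorem log_estimate_mixed_kernel (d : ℕ) (lam C₀ κ : ℝ)
    (hlam0 : 0 < lam) (hlam1 : lam < 1) (hC₀ : 0 < C₀) (hκ : 0 < κ) :
    ∃ C : ℝ, 0 < C ∧
      ∀ (G : EuclideanSpace ℝ (Fin d) → ℝ → EuclideanSpace ℝ (Fin d) → ℝ → ℝ)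
        (F : EuclideanSpace ℝ (Fin d) → ℝ → ℝ)
        (Kinf Khol ε r : ℝ) (x₀ : EuclideanSpace ℝ (Fin d)) (t₀ : ℝ)
        (x : EuclideanSpace ℝ (Fin d)) (t : ℝ),
        (∀ x' t' y s, s < t' →
          |G x' t' y s| ≤ C₀ * (t' - s) ^ (-((d:ℝ) + 2) / 2) *
            Real.exp (-κ * ‖x' - y‖^2 / (t' - s))) →
        (∀ x' t' y s, t' ≤ s → G x' t' y s = 0) →
        0 ≤ Kinf → 0 ≤ Khol →
        (∀ y s, (y, s) ∈ Metric.ball x₀ (2*r) ×ˢ Set.Ioo (t₀ - (2*r)^2) t₀ →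
          |F y s| ≤ Kinf) →
        (∀ y y' s, (y, s) ∈ Metric.ball x₀ (2*r) ×ˢ Set.Ioo (t₀ - (2*r)^2) t₀ →
          (y', s) ∈ Metric.ball x₀ (2*r) ×ˢ Set.Ioo (t₀ - (2*r)^2) t₀ →
          |F y s - F y' s| ≤ Khol * ‖y - y'‖ ^ lam) →
        0 < ε → ε ≤ r →
        (x, t) ∈ Metric.ball x₀ r ×ˢ Set.Ioo (t₀ - r^2) t₀ →
        (∫ q in Metric.ball x₀ (2*r) ×ˢ Set.Ioo (t₀ - (2*r)^2) t₀,
            |G x t q.1 q.2| * |F q.1 q.2 - F x q.2|) ≤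
          C * Real.log (ε⁻¹ * r + 2) * Kinf + C * ε ^ lam * Khol := by
  classical
  set P1 : ℝ := (Real.pi / (κ/2)) ^ ((d:ℝ)/2) with hP1
  set P2 : ℝ := (Real.pi / κ) ^ ((d:ℝ)/2) with hP2
  have hP1n : 0 ≤ P1 := Real.rpow_nonneg (by positivity) _
  have hP2n : 0 ≤ P2 := Real.rpow_nonneg (by positivity) _
  have hκl : 0 ≤ κ ^ (-(lam/2)) := Real.rpow_nonneg hκ.le _
  set A1 : ℝ := C₀ * κ ^ (-(lam/2)) * P1 * (2/lam) with hA1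
  set A2 : ℝ := 8 * C₀ * P2 with hA2
  have hA1n : 0 ≤ A1 := by
    apply mul_nonneg (mul_nonneg (mul_nonneg hC₀.le hκl) hP1n); positivity
  have hA2n : 0 ≤ A2 := mul_nonneg (by positivity) hP2n
  refine ⟨A1 + A2 + 1, by positivity, ?_⟩
  intro G F Kinf Khol ε r x₀ t₀ x t hG hG0 hKinf hKhol hFb hFh hε hεr hxt
  have hr : 0 < r := lt_of_lt_of_le hε hεr
  have ht1 : t₀ - r^2 < t := hxt.2.1
  have ht2 : t < t₀ := hxt.2.2
  have hε2 : (0:ℝ) < ε^2 := pow_pos hε 2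
  have hεr2 : ε^2 ≤ r^2 := pow_le_pow_left₀ hε.le hεr 2
  have hxS : x ∈ Metric.ball x₀ (2*r) := Metric.ball_subset_ball (by linarith) hxt.1
  have hεrpos : 0 < ε⁻¹ * r := mul_pos (inv_pos.mpr hε) hr
  have hlogpos : 0 ≤ Real.log (ε⁻¹ * r + 2) := Real.log_nonneg (by linarith)
  have hεl : 0 ≤ ε ^ lam := Real.rpow_nonneg hε.le _
  have hRHS0 : 0 ≤ (A1 + A2 + 1) * Real.log (ε⁻¹ * r + 2) * Kinf
      + (A1 + A2 + 1) * ε ^ lam * Khol :=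
    add_nonneg (mul_nonneg (mul_nonneg (by positivity) hlogpos) hKinf)
      (mul_nonneg (mul_nonneg (by positivity) hεl) hKhol)
  by_cases hint : IntegrableOn
      (fun q : EuclideanSpace ℝ (Fin d) × ℝ => |G x t q.1 q.2| * |F q.1 q.2 - F x q.2|)
      (Metric.ball x₀ (2*r) ×ˢ Set.Ioo (t₀ - (2*r)^2) t₀)
  swap
  · rw [MeasureTheory.integral_undef hint]; exact hRHS0
  -- the two majorant pieces
  set I1 : Set ℝ := Set.Ioo (t - ε^2) t with hI1
  set I2 : Set ℝ := Set.Ioc (t₀ - (2*r)^2) (t - ε^2) with hI2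
  set coef1 : ℝ := C₀ * Khol * κ ^ (-(lam/2)) with hcoef1
  set coef2 : ℝ := 2 * C₀ * Kinf with hcoef2
  have hcoef1n : 0 ≤ coef1 := mul_nonneg (mul_nonneg hC₀.le hKhol) hκl
  have hcoef2n : 0 ≤ coef2 := by positivity
  have hIsub1 : ∀ s ∈ I1, s < t := fun s hs => hs.2
  have hIsub2 : ∀ s ∈ I2, s < t := fun s hs => lt_of_le_of_lt hs.2 (by linarith)
  have hφ1 : ∀ s ∈ I1, (t - s) ^ ((lam - (d:ℝ) - 2)/2) * (t - s) ^ ((d:ℝ)/2)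
      = (t - s) ^ (lam/2 - 1) := by
    intro s hs
    have hu : 0 < t - s := sub_pos.mpr hs.2
    rw [← Real.rpow_add hu, show (lam - (d:ℝ) - 2)/2 + (d:ℝ)/2 = lam/2 - 1 by ring]
  have hφ2 : ∀ s ∈ I2, (t - s) ^ (-((d:ℝ) + 2)/2) * (t - s) ^ ((d:ℝ)/2) = (t - s)⁻¹ := by
    intro s hs
    have hu : 0 < t - s := sub_pos.mpr (hIsub2 s hs)
    rw [← Real.rpow_add hu, show -((d:ℝ) + 2)/2 + (d:ℝ)/2 = -1 by ring, Real.rpow_neg_one]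
  have hIntφ1 : IntegrableOn (fun s => (t - s) ^ (lam/2 - 1)) I1 := by
    have h0 : IntervalIntegrable (fun u : ℝ => u ^ (lam/2 - 1)) volume 0 (ε^2) :=
      intervalIntegral.intervalIntegrable_rpow' (by linarith)
    have h1 := h0.comp_sub_left t
    rw [sub_zero] at h1
    have h2 : IntegrableOn (fun s => (t - s) ^ (lam/2 - 1)) (Set.Ioc (t - ε^2) t) :=
      (intervalIntegrable_iff_integrableOn_Ioc_of_le (by linarith : t - ε^2 ≤ t)).mp h1.symm
    exact h2.mono_set Set.Ioo_subset_Ioc_self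
  have hab2 : t₀ - (2*r)^2 ≤ t - ε^2 := by nlinarith
  have hIntφ2 : IntegrableOn (fun s => (t - s)⁻¹) I2 := by
    have hc : ContinuousOn (fun s => (t - s)⁻¹) (Set.Icc (t₀ - (2*r)^2) (t - ε^2)) := by
      apply ContinuousOn.inv₀ ((continuous_const.sub continuous_id).continuousOn)
      intro s hs
      have h2 : s ≤ t - ε^2 := hs.2
      have h3 : (0:ℝ) < t - id s := by simp only [id_eq]; linarith
      exact ne_of_gt h3
    exact (hc.integrableOn_Icc).mono_set Set.Ioc_subset_Icc_self
  obtain ⟨hg1int, hg1val⟩ := piece d x t (κ/2) coef1 ((lam - (d:ℝ) - 2)/2)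
    (by positivity) hcoef1n measurableSet_Ioo hIsub1 _ hφ1 hIntφ1
  obtain ⟨hg2int, hg2val⟩ := piece d x t κ coef2 (-((d:ℝ) + 2)/2)
    hκ hcoef2n measurableSet_Ioc hIsub2 _ hφ2 hIntφ2
  set g1 : EuclideanSpace ℝ (Fin d) × ℝ → ℝ := (Set.univ ×ˢ I1).indicator
    (fun q => coef1 * (t - q.2) ^ ((lam - (d:ℝ) - 2)/2)
      * Real.exp (-(κ/2 / (t - q.2) * ‖x - q.1‖^2))) with hg1
  set g2 : EuclideanSpace ℝ (Fin d) × ℝ → ℝ := (Set.univ ×ˢ I2).indicator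
    (fun q => coef2 * (t - q.2) ^ (-((d:ℝ) + 2)/2)
      * Real.exp (-(κ / (t - q.2) * ‖x - q.1‖^2))) with hg2
  have hg1nn : ∀ q, 0 ≤ g1 q := by
    intro q
    apply Set.indicator_nonneg
    rintro ⟨y', s'⟩ ⟨-, hs'⟩
    have hu : 0 < t - s' := sub_pos.mpr hs'.2
    exact mul_nonneg (mul_nonneg hcoef1n (Real.rpow_nonneg hu.le _)) (Real.exp_pos _).le
  have hg2nn : ∀ q, 0 ≤ g2 q := by
    intro q
    apply Set.indicator_nonneg
    rintro ⟨y', s'⟩ ⟨-, hs'⟩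
    have hu : 0 < t - s' := sub_pos.mpr (lt_of_le_of_lt hs'.2 (by linarith))
    exact mul_nonneg (mul_nonneg hcoef2n (Real.rpow_nonneg hu.le _)) (Real.exp_pos _).le
  -- pointwise domination
  have hfg : ∀ q ∈ Metric.ball x₀ (2*r) ×ˢ Set.Ioo (t₀ - (2*r)^2) t₀,
      |G x t q.1 q.2| * |F q.1 q.2 - F x q.2| ≤ g1 q + g2 q := by
    rintro ⟨y, s⟩ hq
    have hsI : s ∈ Set.Ioo (t₀ - (2*r)^2) t₀ := hq.2
    rcases lt_or_ge s t with hst | hst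
    · have hu : 0 < t - s := sub_pos.mpr hst
      have hGb := hG x t y s hst
      have hexp1 : Real.exp (-κ * ‖x - y‖^2 / (t - s))
          = Real.exp (-(κ/(t - s) * ‖x - y‖^2)) := by congr 1; ring
      rcases lt_or_ge (t - ε^2) s with hnear | hfar
      · have hmem1 : ((y, s) : EuclideanSpace ℝ (Fin d) × ℝ) ∈ Set.univ ×ˢ I1 :=
          ⟨Set.mem_univ _, hnear, hst⟩
        have hnot2 : ((y, s) : EuclideanSpace ℝ (Fin d) × ℝ) ∉ Set.univ ×ˢ I2 := by
          rintro ⟨-, hmem⟩; exact absurd hmem.2 (not_le.mpr hnear)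
        rw [hg1, hg2, Set.indicator_of_notMem hnot2, add_zero, Set.indicator_of_mem hmem1]
        have hF : |F y s - F x s| ≤ Khol * ‖y - x‖ ^ lam := hFh y x s hq ⟨hxS, hsI⟩
        have hkey := rpow_exp_key hlam0 hlam1.le (div_pos hκ hu) (norm_nonneg (x - y))
        have hnrm : ‖y - x‖ = ‖x - y‖ := norm_sub_rev y x
        have hsplit : (κ/(t - s)) ^ (-(lam/2)) = κ ^ (-(lam/2)) * (t - s) ^ (lam/2) := by
          rw [Real.div_rpow hκ.le hu.le, Real.rpow_neg hu.le, div_eq_mul_inv, inv_inv]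
        have hcomb : (t - s) ^ (-((d:ℝ) + 2)/2) * (t - s) ^ (lam/2)
            = (t - s) ^ ((lam - (d:ℝ) - 2)/2) := by
          rw [← Real.rpow_add hu, show -((d:ℝ) + 2)/2 + lam/2 = (lam - (d:ℝ) - 2)/2 by ring]
        have hexp2 : Real.exp (-(κ/(t - s) * ‖x - y‖^2)/2)
            = Real.exp (-(κ/2 / (t - s) * ‖x - y‖^2)) := by congr 1; ring
        calc |G x t y s| * |F y s - F x s|
            ≤ (C₀ * (t - s) ^ (-((d:ℝ) + 2)/2) * Real.exp (-κ * ‖x - y‖^2 / (t - s)))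
              * (Khol * ‖y - x‖ ^ lam) := by
              apply mul_le_mul hGb hF (abs_nonneg _)
              exact mul_nonneg (mul_nonneg hC₀.le (Real.rpow_nonneg hu.le _)) (Real.exp_pos _).le
          _ = (C₀ * Khol * (t - s) ^ (-((d:ℝ) + 2)/2))
              * (‖x - y‖ ^ lam * Real.exp (-(κ/(t - s) * ‖x - y‖^2))) := by
              rw [hexp1, hnrm]; ring
          _ ≤ (C₀ * Khol * (t - s) ^ (-((d:ℝ) + 2)/2))
              * ((κ/(t - s)) ^ (-(lam/2)) * Real.exp (-(κ/(t - s) * ‖x - y‖^2)/2)) := by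
              apply mul_le_mul_of_nonneg_left hkey
              exact mul_nonneg (mul_nonneg hC₀.le hKhol) (Real.rpow_nonneg hu.le _)
          _ = coef1 * (t - s) ^ ((lam - (d:ℝ) - 2)/2)
              * Real.exp (-(κ/2 / (t - s) * ‖x - y‖^2)) := by
              rw [hsplit, hexp2, hcoef1, ← hcomb]; ring
      · have hmem2 : ((y, s) : EuclideanSpace ℝ (Fin d) × ℝ) ∈ Set.univ ×ˢ I2 :=
          ⟨Set.mem_univ _, hsI.1, hfar⟩
        have hnot1 : ((y, s) : EuclideanSpace ℝ (Fin d) × ℝ) ∉ Set.univ ×ˢ I1 := by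
          rintro ⟨-, hmem⟩; exact absurd hmem.1 (not_lt.mpr hfar)
        rw [hg1, hg2, Set.indicator_of_notMem hnot1, zero_add, Set.indicator_of_mem hmem2]
        have hF2 : |F y s - F x s| ≤ 2 * Kinf := by
          calc |F y s - F x s| ≤ |F y s| + |F x s| := abs_sub _ _
            _ ≤ Kinf + Kinf := add_le_add (hFb y s hq) (hFb x s ⟨hxS, hsI⟩)
            _ = 2 * Kinf := by ring
        calc |G x t y s| * |F y s - F x s|
            ≤ (C₀ * (t - s) ^ (-((d:ℝ) + 2)/2) * Real.exp (-κ * ‖x - y‖^2 / (t - s)))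
              * (2 * Kinf) := by
              apply mul_le_mul hGb hF2 (abs_nonneg _)
              exact mul_nonneg (mul_nonneg hC₀.le (Real.rpow_nonneg hu.le _)) (Real.exp_pos _).le
          _ = coef2 * (t - s) ^ (-((d:ℝ) + 2)/2) * Real.exp (-(κ / (t - s) * ‖x - y‖^2)) := by
              rw [hexp1, hcoef2]; ring
    · rw [hG0 x t y s hst, abs_zero, zero_mul]
      exact add_nonneg (hg1nn _) (hg2nn _)
  -- time integrals
  have hT1 : (∫ s in Set.Ioo (t - ε^2) t, (t - s) ^ (lam/2 - 1)) = ε ^ lam * (2/lam) := by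
    rw [← MeasureTheory.integral_Ioc_eq_integral_Ioo,
      ← intervalIntegral.integral_of_le (by linarith : t - ε^2 ≤ t),
      intervalIntegral.integral_comp_sub_left (fun u => u ^ (lam/2 - 1)) t,
      sub_self, show t - (t - ε^2) = ε^2 by ring,
      integral_rpow (Or.inl (by linarith)),
      Real.zero_rpow (by intro h; linarith : lam/2 - 1 + 1 ≠ 0)]
    have h2 : lam/2 - 1 + 1 = lam/2 := by ring
    rw [h2]
    have h3 : (ε^2 : ℝ) ^ (lam/2) = ε ^ lam := by
      rw [← Real.rpow_natCast ε 2, ← Real.rpow_mul hε.le]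
      norm_num
      congr 1
      ring
    rw [h3, sub_zero]
    field_simp
  set T : ℝ := t - (t₀ - (2*r)^2) with hTdef
  have hεT : ε^2 < T := by
    have h4 : (2*r)^2 = 4*r^2 := by ring
    rw [hTdef, h4]
    linarith [ht1, hεr2, hε2]
  have hTpos : 0 < T := lt_trans hε2 hεT
  have hT2 : (∫ s in Set.Ioc (t₀ - (2*r)^2) (t - ε^2), (t - s)⁻¹) = Real.log (T / ε^2) := by
    rw [← intervalIntegral.integral_of_le hab2,
      intervalIntegral.integral_comp_sub_left (fun u => u⁻¹) t,
      show t - (t - ε^2) = ε^2 by ring]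
    rw [integral_inv (Set.notMem_uIcc_of_lt hε2 (by linarith))]
  have hT4 : T ≤ (2*r)^2 := by rw [hTdef]; linarith [ht2]
  have hlogle : Real.log (T / ε^2) ≤ 4 * Real.log (ε⁻¹ * r + 2) :=
    log_aux hε hεr hTpos hT4
  -- assembly
  have hSmeas : MeasurableSet (Metric.ball x₀ (2*r) ×ˢ Set.Ioo (t₀ - (2*r)^2) t₀) :=
    measurableSet_ball.prod measurableSet_Ioo
  calc (∫ q in Metric.ball x₀ (2*r) ×ˢ Set.Ioo (t₀ - (2*r)^2) t₀,
          |G x t q.1 q.2| * |F q.1 q.2 - F x q.2|)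
      ≤ ∫ q in Metric.ball x₀ (2*r) ×ˢ Set.Ioo (t₀ - (2*r)^2) t₀, (g1 q + g2 q) :=
        setIntegral_mono_on hint ((hg1int.add hg2int).integrableOn) hSmeas hfg
    _ ≤ ∫ q, (g1 q + g2 q) :=
        setIntegral_le_integral (hg1int.add hg2int)
          (Filter.Eventually.of_forall fun q => add_nonneg (hg1nn q) (hg2nn q))
    _ = (∫ q, g1 q) + ∫ q, g2 q := integral_add hg1int hg2int
    _ = coef1 * (Real.pi / (κ/2)) ^ ((d:ℝ)/2) * (ε ^ lam * (2/lam))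
          + coef2 * (Real.pi / κ) ^ ((d:ℝ)/2) * Real.log (T / ε^2) := by
        rw [hg1val, hg2val, hT1, hT2]
    _ ≤ coef1 * (Real.pi / (κ/2)) ^ ((d:ℝ)/2) * (ε ^ lam * (2/lam))
          + coef2 * (Real.pi / κ) ^ ((d:ℝ)/2) * (4 * Real.log (ε⁻¹ * r + 2)) := by
        refine add_le_add (le_refl _) ?_
        exact mul_le_mul_of_nonneg_left hlogle (mul_nonneg hcoef2n hP2n)
    _ ≤ (A1 + A2 + 1) * Real.log (ε⁻¹ * r + 2) * Kinf + (A1 + A2 + 1) * ε ^ lam * Khol := by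
        have e1 : coef1 * (Real.pi / (κ/2)) ^ ((d:ℝ)/2) * (ε ^ lam * (2/lam))
            = A1 * ε ^ lam * Khol := by
          rw [hA1, hcoef1, hP1]; ring
        have e2 : coef2 * (Real.pi / κ) ^ ((d:ℝ)/2) * (4 * Real.log (ε⁻¹ * r + 2))
            = A2 * Real.log (ε⁻¹ * r + 2) * Kinf := by
          rw [hA2, hcoef2, hP2]; ring
        rw [e1, e2]
        have hA1le : A1 ≤ A1 + A2 + 1 :=
          (le_add_of_nonneg_right hA2n).trans (le_add_of_nonneg_right zero_le_one)
        have hA2le : A2 ≤ A1 + A2 + 1 := by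
          calc A2 ≤ A1 + A2 := le_add_of_nonneg_left hA1n
            _ ≤ A1 + A2 + 1 := le_add_of_nonneg_right zero_le_one
        have h1 : A1 * ε ^ lam * Khol ≤ (A1 + A2 + 1) * (ε ^ lam * Khol) := by
          rw [mul_assoc]
          exact mul_le_mul_of_nonneg_right hA1le (mul_nonneg hεl hKhol)
        have h2 : A2 * Real.log (ε⁻¹ * r + 2) * Kinf
            ≤ (A1 + A2 + 1) * (Real.log (ε⁻¹ * r + 2) * Kinf) := by
          rw [mul_assoc]
          exact mul_le_mul_of_nonneg_right hA2le (mul_nonneg hlogpos hKinf)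
        calc A1 * ε ^ lam * Khol + A2 * Real.log (ε⁻¹ * r + 2) * Kinf
            ≤ (A1 + A2 + 1) * (ε ^ lam * Khol)
              + (A1 + A2 + 1) * (Real.log (ε⁻¹ * r + 2) * Kinf) := add_le_add h1 h2
          _ = (A1 + A2 + 1) * Real.log (ε⁻¹ * r + 2) * Kinf
              + (A1 + A2 + 1) * ε ^ lam * Khol := by ring
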